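/- arXiv:2512.21318 — 3 statements merged into one kernel-verified Lean document; each statement's English description precedes it below -/
import Mathlib

section
/- Fold lemma (simple-homotopy/homotopy equivalence version): if v and w are distinct vertices of a graph G with N(v) ⊆ N(w), then the independence complex Ind(G) is homotopy equivalent to Ind(G \ {w}). -/
open Function Set

/-- A set of vertices of a simple graph is independent if its elements are
pairwise non-adjacent.  The independence complex `Ind G` is the simplicial
complex whose faces are exactly the independent sets. -/
def isIndepSet {V : Type*} (G : SimpleGraph V) (s : Set V) : Prop :=
  s.Pairwise fun a b => ¬ G.Adj a b

/-- Geometric realization of the subcomplex of the independence complex of `G`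
consisting of the independent sets contained in `S` (so `S = univ` gives
`Ind G`, `S = {v}ᶜ` gives `Ind (G \ v)`, and `S = N[v]ᶜ` gives
`Ind (G \ N[v])`): convex combinations of vertices whose support is a face. -/
def indRealizationIn {V : Type*} (G : SimpleGraph V) (S : Set V) : Set (V → ℝ) :=
  {f | (∀ v, 0 ≤ f v) ∧ (Function.support f).Finite ∧ Function.support f ⊆ S ∧
       isIndepSet G (Function.support f) ∧ ∑ᶠ v, f v = 1}

/-- Geometric realization of the independence complex `Ind G`. -/
def indRealization {V : Type*} (G : SimpleGraph V) : Set (V → ℝ) :=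
  indRealizationIn G Set.univ

/-- The (unreduced) suspension of a topological space. -/
def Susp (X : Type*) [TopologicalSpace X] : Type _ :=
  Quot (fun p q : X × unitInterval => (p.2 = 0 ∧ q.2 = 0) ∨ (p.2 = 1 ∧ q.2 = 1))

instance (X : Type*) [TopologicalSpace X] : TopologicalSpace (Susp X) :=
  inferInstanceAs (TopologicalSpace (Quot _))

/-- The wedge of two pointed topological spaces. -/
def WedgeAt (X Y : Type*) [TopologicalSpace X] [TopologicalSpace Y] (x₀ : X) (y₀ : Y) :
    Type _ :=
  Quot (fun p q : X ⊕ Y => p = Sum.inl x₀ ∧ q = Sum.inr y₀)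

instance (X Y : Type*) [TopologicalSpace X] [TopologicalSpace Y] (x₀ : X) (y₀ : Y) :
    TopologicalSpace (WedgeAt X Y x₀ y₀) :=
  inferInstanceAs (TopologicalSpace (Quot _))

/-- The sphere `S^{m-1}`, realized as the unit sphere of `ℝ^m`. -/
def sphere' (m : ℕ) : Set (EuclideanSpace ℝ (Fin m)) := Metric.sphere 0 1

/-- A wedge of two `m`-dimensional spheres: the two unit spheres of `ℝ^{m+1}`
centered at `±e₀`, which are tangent at the origin. -/
def sphereWedge (m : ℕ) : Set (EuclideanSpace ℝ (Fin (m + 1))) :=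
  {x | dist x (EuclideanSpace.single (0 : Fin (m + 1)) (1 : ℝ)) = 1 ∨
       dist x (-(EuclideanSpace.single (0 : Fin (m + 1)) (1 : ℝ))) = 1}

/-- The hexagonal line tiling graph `H_{1×1×n}`: two rows (row `j` carries the
vertices `v^{j+1}_1, …, v^{j+1}_{2n+1}`, column `i : Fin (2n+1)` being the
1-indexed vertex `v^{j+1}_{i+1}`), each row forming a path, together with the
rung edges `{v^1_{2t-1}, v^2_{2t-1}}`, i.e. rungs at even 0-indexed columns. -/
def hexRow (n : ℕ) : SimpleGraph (Fin 2 × Fin (2 * n + 1)) :=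
  SimpleGraph.fromRel (fun p q =>
    (p.1 = q.1 ∧ (p.2 : ℕ) + 1 = (q.2 : ℕ)) ∨
    (p.1 ≠ q.1 ∧ p.2 = q.2 ∧ (p.2 : ℕ) % 2 = 0))

/-- The last vertex `v^1_{2n+1}` of the top row of `H_{1×1×n}`. -/
def hexTop (n : ℕ) : Fin 2 × Fin (2 * n + 1) := (0, ⟨2 * n, by omega⟩)

/-- `X_n^{(1)} = H_{1×1×n} \ {v^1_{2n+1}}` : realization of its independence
complex, as the subcomplex of `Ind (H_{1×1×n})` of faces avoiding `v^1_{2n+1}`. -/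
def Xn1 (n : ℕ) : Set (Fin 2 × Fin (2 * n + 1) → ℝ) :=
  indRealizationIn (hexRow n) ({hexTop n}ᶜ)

/-- `X_n^{(2)} = H_{1×1×n} \ N[v^1_{2n+1}]` : realization of its independence
complex, as the subcomplex of `Ind (H_{1×1×n})` of faces avoiding `N[v^1_{2n+1}]`. -/
def Xn2 (n : ℕ) : Set (Fin 2 × Fin (2 * n + 1) → ℝ) :=
  indRealizationIn (hexRow n) ((insert (hexTop n) ((hexRow n).neighborSet (hexTop n)))ᶜ)


section FoldAux

variable {V : Type*} [DecidableEq V]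

/-- The fold map on barycentric coordinates: push the weight at `w` onto `v`. -/
noncomputable def foldMap (v w : V) (f : V → ℝ) : V → ℝ :=
  Function.update (Function.update f w 0) v (f v + f w)

lemma foldMap_apply (v w : V) (f : V → ℝ) (u : V) :
    foldMap v w f u = if u = v then f v + f w else if u = w then 0 else f u := by
  simp [foldMap, Function.update_apply]

lemma foldMap_eq_self {v w : V} {f : V → ℝ} (hfw : f w = 0) : foldMap v w f = f := by
  have h1 : Function.update f w 0 = f := by rw [← hfw, Function.update_eq_self]
  rw [foldMap, h1, hfw, add_zero, Function.update_eq_self]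

lemma foldMap_nonneg {v w : V} {f : V → ℝ} (hf : ∀ u, 0 ≤ f u) (u : V) :
    0 ≤ foldMap v w f u := by
  rw [foldMap_apply]
  split_ifs
  · exact add_nonneg (hf v) (hf w)
  · exact le_refl 0
  · exact hf u

lemma support_foldMap_subset (v w : V) (f : V → ℝ) :
    Function.support (foldMap v w f) ⊆ insert v (Function.support f) := by
  intro u hu
  rw [Function.mem_support, foldMap_apply] at hu
  by_cases huv : u = v
  · exact Or.inl huv
  · right
    rw [if_neg huv] at hu
    by_cases huw : u = w
    · simp [huw] at hu
    · rw [if_neg huw] at hu; exact hu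

lemma foldMap_apply_w {v w : V} (hvw : v ≠ w) (f : V → ℝ) : foldMap v w f w = 0 := by
  rw [foldMap_apply, if_neg (Ne.symm hvw), if_pos rfl]

lemma indep_insert {G : SimpleGraph V} {v w : V}
    (h : G.neighborSet v ⊆ G.neighborSet w)
    {s : Set V} (hs : isIndepSet G s) (hws : w ∈ s) : isIndepSet G (insert v s) := by
  rw [isIndepSet, Set.pairwise_insert]
  refine ⟨hs, fun b hb hne => ?_⟩
  have key : ¬ G.Adj v b := by
    intro hadj
    have hbw : G.Adj w b := h hadj
    by_cases hbw' : b = w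
    · exact G.loopless.irrefl w (hbw' ▸ hbw)
    · exact hs hws hb (fun e => hbw' e.symm) hbw
  exact ⟨key, fun hadj => key hadj.symm⟩

lemma finsum_foldMap {v w : V} (hvw : v ≠ w) {f : V → ℝ}
    (hfin : (Function.support f).Finite) :
    ∑ᶠ u, foldMap v w f u = ∑ᶠ u, f u := by
  classical
  set t : Finset V := hfin.toFinset ∪ {v, w} with ht
  have hv : v ∈ t := by simp [ht]
  have hw : w ∈ t := by simp [ht]
  have hsupp : Function.support f ⊆ ↑t := by
    intro u hu
    exact Finset.mem_coe.mpr (Finset.mem_union_left _ (hfin.mem_toFinset.mpr hu))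
  have hsupp' : Function.support (foldMap v w f) ⊆ ↑t := by
    refine (support_foldMap_subset v w f).trans ?_
    intro u hu
    rcases hu with rfl | hu
    · exact hv
    · exact hsupp hu
  rw [finsum_eq_finset_sum_of_support_subset _ hsupp',
      finsum_eq_finset_sum_of_support_subset _ hsupp]
  have hwv : w ∈ t \ {v} := by
    rw [Finset.mem_sdiff, Finset.mem_singleton]; exact ⟨hw, Ne.symm hvw⟩
  rw [foldMap, Finset.sum_update_of_mem hv, Finset.sum_update_of_mem hwv]
  have h1 : ∑ x ∈ t, f x = f v + ∑ x ∈ t \ {v}, f x := by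
    rw [Finset.sum_eq_sum_sdiff_singleton_add hv, add_comm]
  have h2 : ∑ x ∈ t \ {v}, f x = f w + ∑ x ∈ (t \ {v}) \ {w}, f x := by
    rw [Finset.sum_eq_sum_sdiff_singleton_add hwv, add_comm]
  rw [h1, h2]; ring

lemma foldMap_mem {G : SimpleGraph V} {v w : V} (hvw : v ≠ w)
    (h : G.neighborSet v ⊆ G.neighborSet w)
    {f : V → ℝ} (hf : f ∈ indRealization G) :
    foldMap v w f ∈ indRealizationIn G ({w}ᶜ : Set V) := by
  obtain ⟨hpos, hfin, -, hind, hsum⟩ := hf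
  refine ⟨foldMap_nonneg hpos, (hfin.insert v).subset (support_foldMap_subset v w f),
    ?_, ?_, by rw [finsum_foldMap hvw hfin]; exact hsum⟩
  · intro u hu
    simp only [Set.mem_compl_iff, Set.mem_singleton_iff]
    rintro rfl
    exact hu (foldMap_apply_w hvw f)
  · by_cases hw0 : f w = 0
    · rw [foldMap_eq_self hw0]; exact hind
    · exact (indep_insert h hind hw0).mono (support_foldMap_subset v w f)

lemma comb_mem {G : SimpleGraph V} {v w : V} (hvw : v ≠ w)
    (h : G.neighborSet v ⊆ G.neighborSet w)
    {f : V → ℝ} (hf : f ∈ indRealization G) {t : ℝ} (ht0 : 0 ≤ t) (ht1 : t ≤ 1) :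
    (fun u => (1 - t) * f u + t * foldMap v w f u) ∈ indRealization G := by
  obtain ⟨hpos, hfin, -, hind, hsum⟩ := hf
  have hsub : Function.support (fun u => (1 - t) * f u + t * foldMap v w f u) ⊆
      insert v (Function.support f) := by
    intro u hu
    rw [Function.mem_support] at hu
    by_cases h1 : f u = 0
    · by_cases h2 : foldMap v w f u = 0
      · exact absurd (by rw [h1, h2]; ring) hu
      · exact support_foldMap_subset v w f h2
    · exact Or.inr h1
  refine ⟨fun u => add_nonneg (mul_nonneg (by linarith) (hpos u))
      (mul_nonneg ht0 (foldMap_nonneg hpos u)),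
    (hfin.insert v).subset hsub, Set.subset_univ _, ?_, ?_⟩
  · by_cases hw0 : f w = 0
    · have : (fun u => (1 - t) * f u + t * foldMap v w f u) = f := by
        funext u; rw [foldMap_eq_self hw0]; ring
      rw [this]; exact hind
    · exact (indep_insert h hind hw0).mono hsub
  · have hfin1 : (Function.support fun u => (1 - t) * f u).Finite :=
      hfin.subset (by intro u hu; rw [Function.mem_support] at hu ⊢; intro e; apply hu; rw [e]; ring)
    have hfinF : (Function.support (foldMap v w f)).Finite :=
      (hfin.insert v).subset (support_foldMap_subset v w f)
    have hfin2 : (Function.support fun u => t * foldMap v w f u).Finite :=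
      hfinF.subset (by intro u hu; rw [Function.mem_support] at hu ⊢; intro e; apply hu; rw [e]; ring)
    rw [finsum_add_distrib hfin1 hfin2, ← mul_finsum _ _, ← mul_finsum _ _,
      finsum_foldMap hvw hfin, hsum]
    ring

end FoldAux

/-- fold lemma: if `v ≠ w` and `N(v) ⊆ N(w)` then
`Ind G ≃ Ind (G \ {w})`. -/
theorem fold_lemma {V : Type*} (G : SimpleGraph V) (v w : V) (hvw : v ≠ w)
    (h : G.neighborSet v ⊆ G.neighborSet w) :
    Nonempty (ContinuousMap.HomotopyEquiv
      (↥(indRealization G)) (↥(indRealizationIn G ({w}ᶜ : Set V)))) := by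
  classical
  -- the inclusion `Ind (G \ w) → Ind G`
  have hincl : ∀ f : V → ℝ, f ∈ indRealizationIn G ({w}ᶜ : Set V) → f ∈ indRealization G := by
    rintro f ⟨a, b, c, d, e⟩
    exact ⟨a, b, Set.subset_univ _, d, e⟩
  let ι : C(↥(indRealizationIn G ({w}ᶜ : Set V)), ↥(indRealization G)) :=
    ⟨fun f => ⟨f.1, hincl f.1 f.2⟩, Continuous.subtype_mk continuous_subtype_val _⟩
  -- the fold map `Ind G → Ind (G \ w)`
  have hrcont : Continuous fun f : ↥(indRealization G) => foldMap v w f.1 := by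
    apply continuous_pi
    intro u
    simp only [foldMap_apply]
    split_ifs
    · exact ((continuous_apply v).comp continuous_subtype_val).add
        ((continuous_apply w).comp continuous_subtype_val)
    · exact continuous_const
    · exact (continuous_apply u).comp continuous_subtype_val
  let r : C(↥(indRealization G), ↥(indRealizationIn G ({w}ᶜ : Set V))) :=
    ⟨fun f => ⟨foldMap v w f.1, foldMap_mem hvw h f.2⟩, Continuous.subtype_mk hrcont _⟩
  -- the straight-line homotopy from `id` to `ι ∘ r`
  have hHcont : Continuous fun p : unitInterval × ↥(indRealization G) =>
      (fun u => (1 - (p.1 : ℝ)) * p.2.1 u + (p.1 : ℝ) * foldMap v w p.2.1 u) := by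
    apply continuous_pi
    intro u
    have hT : Continuous fun p : unitInterval × ↥(indRealization G) => (p.1 : ℝ) :=
      continuous_subtype_val.comp continuous_fst
    have hF : ∀ z : V, Continuous fun p : unitInterval × ↥(indRealization G) => p.2.1 z :=
      fun z => (continuous_apply z).comp (continuous_subtype_val.comp continuous_snd)
    simp only [foldMap_apply]
    split_ifs
    · exact ((continuous_const.sub hT).mul (hF u)).add (hT.mul ((hF v).add (hF w)))
    · exact ((continuous_const.sub hT).mul (hF u)).add (hT.mul continuous_const)
    · exact ((continuous_const.sub hT).mul (hF u)).add (hT.mul (hF u))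
  let H : ContinuousMap.Homotopy (ContinuousMap.id ↥(indRealization G)) (ι.comp r) :=
    { toFun := fun p => ⟨fun u => (1 - (p.1 : ℝ)) * p.2.1 u + (p.1 : ℝ) * foldMap v w p.2.1 u,
        comb_mem hvw h p.2.2 p.1.2.1 p.1.2.2⟩
      continuous_toFun := Continuous.subtype_mk hHcont _
      map_zero_left := by
        intro f
        apply Subtype.ext
        funext u
        show (1 - ((0 : unitInterval) : ℝ)) * f.1 u + ((0 : unitInterval) : ℝ) * _ = f.1 u
        norm_num
      map_one_left := by
        intro f
        apply Subtype.ext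
        funext u
        show (1 - ((1 : unitInterval) : ℝ)) * f.1 u + ((1 : unitInterval) : ℝ) *
          foldMap v w f.1 u = foldMap v w f.1 u
        norm_num }
  have hri : r.comp ι = ContinuousMap.id _ := by
    apply ContinuousMap.ext
    intro f
    apply Subtype.ext
    have hfw : f.1 w = 0 := by
      by_contra hne
      have := f.2.2.2.1 hne
      simp at this
    exact foldMap_eq_self hfw
  exact ⟨{ toFun := r, invFun := ι, left_inv := ContinuousMap.Homotopic.symm (Nonempty.intro H),
           right_inv := hri ▸ ContinuousMap.Homotopic.refl _ }⟩
end

section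
/- The independence complex of the path graph P_n on n vertices is homotopy equivalent to: a sphere S^{k-1} if n = 3k; a point if n = 3k+1; and a sphere S^k if n = 3k+2. -/
open Function Set

section Step

variable {n : ℕ} (G : SimpleGraph (Fin n)) (S : Set (Fin n)) (v w : Fin n)

/-- the "fold" map coordinate data -/
private def cc (v w u : Fin n) : ℝ := (if u = v then 1 else 0) - (if u = w then 1 else 0)

lemma mem_fold (hv : v ∈ S) (hvw : v ≠ w) (hadj : ¬ G.Adj v w)
    (hdom : ∀ u ∈ S, G.Adj v u → u ≠ w → G.Adj w u)
    {f : Fin n → ℝ} (hf : f ∈ indRealizationIn G S) {t : ℝ} (ht0 : 0 ≤ t) (ht1 : t ≤ 1) :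
    (fun u => f u + t * f w * cc v w u) ∈ indRealizationIn G S := by
  obtain ⟨hpos, hfin, hsub, hind, hsum⟩ := hf
  by_cases hw0 : f w = 0
  · have : (fun u => f u + t * f w * cc v w u) = f := by
      funext u; simp [hw0]
    rw [this]; exact ⟨hpos, hfin, hsub, hind, hsum⟩
  have hwsupp : w ∈ support f := hw0
  have hsupp : support (fun u => f u + t * f w * cc v w u) ⊆ support f ∪ {v} := by
    intro u hu
    by_cases huv : u = v
    · exact Or.inr huv
    by_cases huw : u = w
    · subst huw; exact Or.inl hwsupp
    · left
      simp only [mem_support] at hu ⊢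
      simpa [cc, huv, huw] using hu
  have hindkey : isIndepSet G (support f ∪ {v}) := by
    have key : ∀ a ∈ support f, ¬ G.Adj v a := by
      intro a ha hVa
      by_cases haw : a = w
      · exact hadj (haw ▸ hVa)
      · exact hind hwsupp ha (Ne.symm haw) (hdom a (hsub ha) hVa haw)
    intro a ha b hb hab
    rcases ha with ha | ha
    · rcases hb with hb | hb
      · exact hind ha hb hab
      · rw [mem_singleton_iff] at hb; subst hb
        exact fun h => key a ha (G.adj_symm h)
    · rw [mem_singleton_iff] at ha; subst ha
      rcases hb with hb | hb
      · exact key b hb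
      · exact absurd hb.symm hab
  refine ⟨?_, Set.toFinite _, ?_, ?_, ?_⟩
  · intro u
    by_cases huv : u = v
    · rw [huv]
      simp only [cc, if_pos rfl, if_neg hvw, if_true]
      nlinarith [hpos v, hpos w]
    by_cases huw : u = w
    · rw [huw]
      simp only [cc, if_neg (Ne.symm hvw), if_pos rfl, if_true]
      nlinarith [hpos w]
    · simpa [cc, huv, huw] using hpos u
  · exact hsupp.trans (union_subset hsub (by simpa using hv))
  · exact hindkey.mono hsupp
  · rw [finsum_eq_sum_of_fintype]
    rw [finsum_eq_sum_of_fintype] at hsum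
    rw [Finset.sum_add_distrib, hsum]
    have : ∑ u, t * f w * cc v w u = t * f w * ∑ u, cc v w u := by
      rw [Finset.mul_sum]
    rw [this]
    have : ∑ u, cc v w u = 0 := by
      simp [cc, Finset.sum_sub_distrib, Finset.sum_ite_eq']
    rw [this]; ring

lemma fold_w_eq_zero (hvw : v ≠ w) (f : Fin n → ℝ) :
    (fun u => f u + 1 * f w * cc v w u) w = 0 := by
  simp only [cc, if_neg (Ne.symm hvw), if_pos rfl, if_true]
  ring

lemma step_he (hv : v ∈ S) (hw : w ∈ S) (hvw : v ≠ w) (hadj : ¬ G.Adj v w)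
    (hdom : ∀ u ∈ S, G.Adj v u → u ≠ w → G.Adj w u) :
    Nonempty (ContinuousMap.HomotopyEquiv ↥(indRealizationIn G S)
      ↥(indRealizationIn G (S \ {w}))) := by
  classical
  -- retraction
  have memr : ∀ f : ↥(indRealizationIn G S),
      (fun u => f.1 u + 1 * f.1 w * cc v w u) ∈ indRealizationIn G (S \ {w}) := by
    intro f
    obtain ⟨hpos, hfin, hsub, hind, hsum⟩ := mem_fold G S v w hv hvw hadj hdom f.2
      (t := 1) zero_le_one le_rfl
    refine ⟨hpos, hfin, ?_, hind, hsum⟩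
    intro u hu
    refine ⟨hsub hu, ?_⟩
    simp only [mem_singleton_iff]
    intro hueq
    rw [hueq] at hu
    exact hu (fold_w_eq_zero v w hvw f.1)
  have contc : ∀ u : Fin n, Continuous fun f : ↥(indRealizationIn G S) => f.1 u := by
    intro u; exact (continuous_apply u).comp continuous_subtype_val
  let r : C(↥(indRealizationIn G S), ↥(indRealizationIn G (S \ {w}))) :=
    ⟨fun f => ⟨fun u => f.1 u + 1 * f.1 w * cc v w u, memr f⟩, by
      refine Continuous.subtype_mk ?_ _
      exact continuous_pi fun u => ((contc u).add (((continuous_const.mul (contc w))).mul continuous_const))⟩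
  have memi : ∀ f : ↥(indRealizationIn G (S \ {w})), f.1 ∈ indRealizationIn G S := by
    rintro ⟨f, hpos, hfin, hsub, hind, hsum⟩
    exact ⟨hpos, hfin, hsub.trans diff_subset, hind, hsum⟩
  let incl : C(↥(indRealizationIn G (S \ {w})), ↥(indRealizationIn G S)) :=
    ⟨fun f => ⟨f.1, memi f⟩, Continuous.subtype_mk continuous_subtype_val _⟩
  have hwzero : ∀ f : ↥(indRealizationIn G (S \ {w})), f.1 w = 0 := by
    rintro ⟨f, hpos, hfin, hsub, hind, hsum⟩
    by_contra h
    exact (hsub h).2 rfl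
  -- homotopy from incl ∘ r to id
  let H : ContinuousMap.Homotopy (incl.comp r) (ContinuousMap.id _) :=
    { toFun := fun p => ⟨fun u => p.2.1 u + (1 - p.1.1) * p.2.1 w * cc v w u,
        mem_fold G S v w hv hvw hadj hdom p.2.2 (by simpa using p.1.2.2)
          (by simpa using p.1.2.1)⟩
      continuous_toFun := by
        refine Continuous.subtype_mk ?_ _
        refine continuous_pi fun u => ?_
        have c1 : Continuous fun p : unitInterval × ↥(indRealizationIn G S) => p.2.1 u :=
          (contc u).comp continuous_snd
        have c2 : Continuous fun p : unitInterval × ↥(indRealizationIn G S) => p.2.1 w :=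
          (contc w).comp continuous_snd
        have c3 : Continuous fun p : unitInterval × ↥(indRealizationIn G S) => (1 - p.1.1 : ℝ) :=
          continuous_const.sub (continuous_subtype_val.comp continuous_fst)
        exact c1.add ((c3.mul c2).mul continuous_const)
      map_zero_left := by
        intro f
        ext u
        show f.1 u + (1 - ((0 : unitInterval) : ℝ)) * f.1 w * cc v w u = _
        simp [r, incl]
      map_one_left := by
        intro f
        ext u
        show f.1 u + (1 - ((1 : unitInterval) : ℝ)) * f.1 w * cc v w u = _
        simp }
  refine ⟨{ toFun := r, invFun := incl, left_inv := ⟨H⟩, right_inv := ?_ }⟩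
  have : r.comp incl = ContinuousMap.id _ := by
    ext f u
    simp [r, incl, hwzero f]
  rw [this]

end Step

section Iter

open SimpleGraph

def Sset (n j : ℕ) : Set (Fin n) := {v | (v : ℕ) % 3 = 2 → 3 * j ≤ (v : ℕ)}

lemma iter_he (n : ℕ) : ∀ j, 3 * j ≤ n →
    Nonempty (ContinuousMap.HomotopyEquiv ↥(indRealizationIn (pathGraph n) (Sset n 0))
      ↥(indRealizationIn (pathGraph n) (Sset n j))) := by
  intro j
  induction j with
  | zero => exact fun _ => ⟨ContinuousMap.HomotopyEquiv.refl _⟩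
  | succ j ih =>
    intro hj
    obtain ⟨e1⟩ := ih (by omega)
    have hvlt : 3 * j < n := by omega
    have hwlt : 3 * j + 2 < n := by omega
    have hset : Sset n (j + 1) = Sset n j \ {(⟨3 * j + 2, hwlt⟩ : Fin n)} := by
      ext x
      simp only [Sset, mem_setOf_eq, mem_diff, mem_singleton_iff, Fin.ext_iff]
      have := x.isLt
      constructor
      · intro h
        refine ⟨fun h2 => by have := h h2; omega, fun h2 => ?_⟩
        have h3 : (x : ℕ) % 3 = 2 := by
          rw [show (x : ℕ) = 3 * j + 2 from h2]; omega
        have := h h3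
        rw [show (x : ℕ) = 3 * j + 2 from h2] at this
        omega
      · rintro ⟨h1, h2⟩ h3
        have := h1 h3
        have h4 : (x : ℕ) ≠ 3 * j + 2 := h2
        omega
    obtain ⟨e2⟩ := step_he (pathGraph n) (Sset n j) ⟨3 * j, hvlt⟩ ⟨3 * j + 2, hwlt⟩
      (by intro h; exact absurd h (by norm_num [Nat.mul_mod_right]))
      (fun _ => by norm_num)
      (by simp only [ne_eq, Fin.ext_iff]; omega)
      (by
        intro h
        have h' : (3 * j) + 1 = 3 * j + 2 ∨ (3 * j + 2) + 1 = 3 * j := pathGraph_adj.mp h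
        omega)
      (by
        intro u hu hadj hne
        have hadj' : 3 * j + 1 = (u : ℕ) ∨ (u : ℕ) + 1 = 3 * j := pathGraph_adj.mp hadj
        have hu' : (u : ℕ) % 3 = 2 → 3 * j ≤ (u : ℕ) := hu
        refine pathGraph_adj.mpr ?_
        show 3 * j + 2 + 1 = (u : ℕ) ∨ (u : ℕ) + 1 = 3 * j + 2
        rcases hadj' with h | h
        · right; omega
        · exfalso
          have : (u : ℕ) % 3 = 2 := by omega
          have := hu' this
          omega)
    rw [hset]
    exact ⟨e1.trans e2⟩

lemma Sset_zero (n : ℕ) : Sset n 0 = Set.univ := by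
  ext x; simp [Sset]

/-- composed homotopy equivalence to the final subcomplex -/
lemma he_final (n k : ℕ) (h1 : 3 * k ≤ n) (h2 : n ≤ 3 * k + 2) :
    Nonempty (ContinuousMap.HomotopyEquiv ↥(indRealizationIn (pathGraph n) Set.univ)
      ↥(indRealizationIn (pathGraph n) {v : Fin n | (v : ℕ) % 3 ≠ 2})) := by
  have hfin : Sset n k = {v : Fin n | (v : ℕ) % 3 ≠ 2} := by
    ext x
    have := x.isLt
    simp only [Sset, mem_setOf_eq]
    constructor
    · intro h h3; have := h h3; omega
    · intro h h3; exact absurd h3 h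
  have := iter_he n k h1
  rwa [Sset_zero, hfin] at this

end Iter

section Contractible

open SimpleGraph

def deltaF (n : ℕ) (u0 : Fin n) : Fin n → ℝ := fun u => if u = u0 then 1 else 0

lemma contractible_final (k : ℕ) :
    ContractibleSpace
      ↥(indRealizationIn (pathGraph (3 * k + 1)) {v : Fin (3 * k + 1) | (v : ℕ) % 3 ≠ 2}) := by
  classical
  have hklt : 3 * k < 3 * k + 1 := by omega
  set S : Set (Fin (3 * k + 1)) := {v : Fin (3 * k + 1) | (v : ℕ) % 3 ≠ 2} with hS
  set u0 : Fin (3 * k + 1) := ⟨3 * k, hklt⟩ with hu0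
  have hdnn : ∀ u, (0 : ℝ) ≤ deltaF _ u0 u := by
    intro u; unfold deltaF; split <;> norm_num
  have hdsupp : support (deltaF _ u0) ⊆ {u0} := by
    intro u hu
    simp only [Function.mem_support, deltaF] at hu
    by_contra h
    simp only [mem_singleton_iff] at h
    simp [h] at hu
  have hu0S : u0 ∈ S := by
    simp only [hS, mem_setOf_eq, hu0]
    show 3 * k % 3 ≠ 2
    omega
  have hdmem : deltaF _ u0 ∈ indRealizationIn (pathGraph (3 * k + 1)) S := by
    refine ⟨hdnn, Set.toFinite _, hdsupp.trans (by simpa using hu0S), ?_, ?_⟩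
    · intro a ha b hb hab
      exact absurd ((hdsupp ha).trans (hdsupp hb).symm) hab
    · rw [finsum_eq_sum_of_fintype]
      simp [deltaF]
  have hkey : ∀ x : Fin (3 * k + 1), x ∈ S → ¬ (pathGraph (3 * k + 1)).Adj u0 x := by
    intro x hx hadj
    have h' : 3 * k + 1 = (x : ℕ) ∨ (x : ℕ) + 1 = 3 * k := pathGraph_adj.mp hadj
    have hx' : (x : ℕ) % 3 ≠ 2 := hx
    have := x.isLt
    omega
  have memH : ∀ (t : ℝ), 0 ≤ t → t ≤ 1 → ∀ f ∈ indRealizationIn (pathGraph (3 * k + 1)) S,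
      (fun u => (1 - t) * f u + t * deltaF _ u0 u) ∈
        indRealizationIn (pathGraph (3 * k + 1)) S := by
    intro t ht0 ht1 f ⟨hpos, hfin, hsub, hind, hsum⟩
    have hsupp : support (fun u => (1 - t) * f u + t * deltaF _ u0 u) ⊆
        support f ∪ {u0} := by
      intro u hu
      simp only [Function.mem_support] at hu
      by_contra h
      rw [Set.mem_union] at h
      push_neg at h
      obtain ⟨h1, h2⟩ := h
      simp only [Function.mem_support, not_not] at h1
      simp only [mem_singleton_iff] at h2
      have : deltaF _ u0 u = 0 := by simp [deltaF, h2]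
      simp [h1, this] at hu
    refine ⟨?_, Set.toFinite _, ?_, ?_, ?_⟩
    · intro u
      show (0 : ℝ) ≤ (1 - t) * f u + t * deltaF _ u0 u
      nlinarith [hpos u, hdnn u]
    · exact hsupp.trans (union_subset hsub (by simpa using hu0S))
    · refine (Set.Pairwise.mono hsupp ?_)
      intro a ha b hb hab
      rcases ha with ha | ha
      · rcases hb with hb | hb
        · exact hind ha hb hab
        · rw [mem_singleton_iff] at hb; subst hb
          exact fun h => hkey a (hsub ha) ((pathGraph _).adj_symm h)
      · rw [mem_singleton_iff] at ha; subst ha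
        rcases hb with hb | hb
        · exact hkey b (hsub hb)
        · exact absurd hb.symm hab
    · rw [finsum_eq_sum_of_fintype]
      rw [finsum_eq_sum_of_fintype] at hsum
      rw [Finset.sum_add_distrib, ← Finset.mul_sum, ← Finset.mul_sum, hsum]
      have : ∑ u, deltaF _ u0 u = 1 := by simp [deltaF]
      rw [this]; ring
  rw [contractible_iff_id_nullhomotopic]
  refine ⟨⟨deltaF _ u0, hdmem⟩, ?_⟩
  have contc : ∀ u : Fin (3 * k + 1), Continuous
      fun p : unitInterval × ↥(indRealizationIn (pathGraph (3 * k + 1)) S) => p.2.1 u := by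
    intro u
    exact (continuous_apply u).comp (continuous_subtype_val.comp continuous_snd)
  let Hmap : C(unitInterval × ↥(indRealizationIn (pathGraph (3 * k + 1)) S),
      ↥(indRealizationIn (pathGraph (3 * k + 1)) S)) :=
    ⟨fun p => ⟨fun u => (1 - p.1.1) * p.2.1 u + p.1.1 * deltaF _ u0 u,
        memH p.1.1 p.1.2.1 p.1.2.2 p.2.1 p.2.2⟩, by
      refine Continuous.subtype_mk ?_ _
      refine continuous_pi fun u => ?_
      have ct : Continuous fun p :
          unitInterval × ↥(indRealizationIn (pathGraph (3 * k + 1)) S) =>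
          (p.1.1 : ℝ) := continuous_subtype_val.comp continuous_fst
      exact ((continuous_const.sub ct).mul (contc u)).add (ct.mul continuous_const)⟩
  refine ⟨⟨Hmap, ?_, ?_⟩⟩
  · intro f
    ext u
    show (1 - ((0 : unitInterval) : ℝ)) * f.1 u + ((0 : unitInterval) : ℝ) * deltaF _ u0 u = _
    norm_num
  · intro f
    ext u
    show (1 - ((1 : unitInterval) : ℝ)) * f.1 u + ((1 : unitInterval) : ℝ) * deltaF _ u0 u = _
    norm_num

end Contractible

section Sphere

open SimpleGraph

lemma max_add_max_neg (a : ℝ) : max a 0 + max (-a) 0 = |a| := by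
  rcases le_total 0 a with h | h
  · rw [max_eq_left h, max_eq_right (neg_nonpos.mpr h), add_zero, abs_of_nonneg h]
  · rw [max_eq_right h, max_eq_left (neg_nonneg.mpr h), zero_add, abs_of_nonpos h]

lemma max_sub_max_neg (a : ℝ) : max a 0 - max (-a) 0 = a := by
  rcases le_total 0 a with h | h
  · rw [max_eq_left h, max_eq_right (neg_nonpos.mpr h), sub_zero]
  · rw [max_eq_right h, max_eq_left (neg_nonneg.mpr h), zero_sub, neg_neg]

variable (n m : ℕ) (hn2 : 3 * m ≤ n + 1)

def Afn : Fin m → Fin n := fun i => ⟨3 * (i : ℕ), by have := i.2; omega⟩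

def Bfn : Fin m → Fin n := fun i => ⟨3 * (i : ℕ) + 1, by have := i.2; omega⟩

@[simp] lemma Afn_val (i : Fin m) : ((Afn n m hn2 i : Fin n) : ℕ) = 3 * (i : ℕ) := rfl

@[simp] lemma Bfn_val (i : Fin m) : ((Bfn n m hn2 i : Fin n) : ℕ) = 3 * (i : ℕ) + 1 := rfl

lemma Afn_inj {i j : Fin m} (h : Afn n m hn2 i = Afn n m hn2 j) : i = j := by
  have := congrArg Fin.val h
  simp only [Afn_val] at this
  exact Fin.ext (by omega)

lemma Bfn_inj {i j : Fin m} (h : Bfn n m hn2 i = Bfn n m hn2 j) : i = j := by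
  have := congrArg Fin.val h
  simp only [Bfn_val] at this
  exact Fin.ext (by omega)

lemma Afn_ne_Bfn (i j : Fin m) : Afn n m hn2 i ≠ Bfn n m hn2 j := by
  intro h
  have := congrArg Fin.val h
  simp only [Afn_val, Bfn_val] at this
  omega

lemma classify (hn1 : n ≤ 3 * m) (u : Fin n) :
    (∃ i, u = Afn n m hn2 i) ∨ (∃ i, u = Bfn n m hn2 i) ∨ (u : ℕ) % 3 = 2 := by
  have hu := u.2
  by_cases h2 : (u : ℕ) % 3 = 2
  · exact Or.inr (Or.inr h2)
  by_cases h0 : (u : ℕ) % 3 = 0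
  · refine Or.inl ⟨⟨(u : ℕ) / 3, by omega⟩, Fin.ext ?_⟩
    simp only [Afn_val]
    omega
  · refine Or.inr (Or.inl ⟨⟨(u : ℕ) / 3, by omega⟩, Fin.ext ?_⟩)
    simp only [Bfn_val]
    omega

lemma sum_pairs (hn1 : n ≤ 3 * m) (f : Fin n → ℝ)
    (hf : ∀ u : Fin n, (u : ℕ) % 3 = 2 → f u = 0) :
    ∑ u, f u = ∑ i, (f (Afn n m hn2 i) + f (Bfn n m hn2 i)) := by
  classical
  rw [Finset.sum_add_distrib]
  have hst := Fintype.sum_sum_type (fun p : Fin m ⊕ Fin m =>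
    f (Sum.elim (Afn n m hn2) (Bfn n m hn2) p))
  simp only [Sum.elim_inl, Sum.elim_inr] at hst
  rw [← hst]
  rw [← Finset.sum_image (g := Sum.elim (Afn n m hn2) (Bfn n m hn2)) (f := f) ?hinj]
  case hinj =>
    rintro (i | i) - (j | j) - h
    · rw [Afn_inj n m hn2 h]
    · exact absurd h (Afn_ne_Bfn n m hn2 i j)
    · exact absurd h.symm (Afn_ne_Bfn n m hn2 j i)
    · rw [Bfn_inj n m hn2 h]
  refine (Finset.sum_subset (Finset.subset_univ _) ?_).symm
  intro u _ hu
  rcases classify n m hn2 hn1 u with ⟨i, rfl⟩ | ⟨i, rfl⟩ | h2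
  · exact absurd (Finset.mem_image.mpr ⟨Sum.inl i, Finset.mem_univ _, rfl⟩) hu
  · exact absurd (Finset.mem_image.mpr ⟨Sum.inr i, Finset.mem_univ _, rfl⟩) hu
  · exact hf u h2

noncomputable def xmap (f : Fin n → ℝ) : EuclideanSpace ℝ (Fin m) :=
  (WithLp.equiv 2 (Fin m → ℝ)).symm (fun i => f (Afn n m hn2 i) - f (Bfn n m hn2 i))

lemma xmap_apply (f : Fin n → ℝ) (i : Fin m) :
    xmap n m hn2 f i = f (Afn n m hn2 i) - f (Bfn n m hn2 i) := rfl

lemma Lpos (y : EuclideanSpace ℝ (Fin m)) (hy : y ≠ 0) : 0 < ∑ i, |y i| := by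
  have hex : ∃ i, y i ≠ 0 := by
    by_contra h
    push_neg at h
    exact hy (PiLp.ext h)
  obtain ⟨i, hi⟩ := hex
  have h1 : 0 < |y i| := abs_pos.mpr hi
  have h2 : |y i| ≤ ∑ j, |y j| :=
    Finset.single_le_sum (f := fun j => |y j|) (fun j _ => abs_nonneg _) (Finset.mem_univ i)
  linarith

noncomputable def psiFn (y : EuclideanSpace ℝ (Fin m)) : Fin n → ℝ := fun u =>
  (∑ i, ((if u = Afn n m hn2 i then max (y i) 0 else 0) +
    (if u = Bfn n m hn2 i then max (-(y i)) 0 else 0))) / (∑ i, |y i|)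

lemma psiFn_A (y : EuclideanSpace ℝ (Fin m)) (j : Fin m) :
    psiFn n m hn2 y (Afn n m hn2 j) = max (y j) 0 / (∑ i, |y i|) := by
  unfold psiFn
  congr 1
  rw [Finset.sum_eq_single j]
  · rw [if_pos rfl, if_neg (Afn_ne_Bfn n m hn2 j j), add_zero]
  · intro i _ hij
    rw [if_neg (fun h => hij (Afn_inj n m hn2 h).symm),
      if_neg (Afn_ne_Bfn n m hn2 j i), add_zero]
  · intro h
    exact absurd (Finset.mem_univ j) h

lemma psiFn_B (y : EuclideanSpace ℝ (Fin m)) (j : Fin m) :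
    psiFn n m hn2 y (Bfn n m hn2 j) = max (-(y j)) 0 / (∑ i, |y i|) := by
  unfold psiFn
  congr 1
  rw [Finset.sum_eq_single j]
  · rw [if_pos rfl, if_neg (Ne.symm (Afn_ne_Bfn n m hn2 j j)), zero_add]
  · intro i _ hij
    rw [if_neg (Ne.symm (Afn_ne_Bfn n m hn2 i j)),
      if_neg (fun h => hij (Bfn_inj n m hn2 h).symm), add_zero]
  · intro h
    exact absurd (Finset.mem_univ j) h

lemma psiFn_other (y : EuclideanSpace ℝ (Fin m)) (u : Fin n) (hu : (u : ℕ) % 3 = 2) :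
    psiFn n m hn2 y u = 0 := by
  unfold psiFn
  have : ∀ i ∈ Finset.univ, ((if u = Afn n m hn2 i then max (y i) 0 else 0) +
      (if u = Bfn n m hn2 i then max (-(y i)) 0 else 0)) = 0 := by
    intro i _
    rw [if_neg, if_neg, add_zero]
    · intro h; rw [h] at hu; simp only [Bfn_val] at hu; omega
    · intro h; rw [h] at hu; simp only [Afn_val] at hu; omega
  rw [Finset.sum_congr rfl this]
  simp

end Sphere

section SphereMain

open SimpleGraph

lemma mul_max_zero (c t : ℝ) (hc : 0 ≤ c) : c * max t 0 = max (c * t) 0 := by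
  rw [mul_max_of_nonneg _ _ hc, mul_zero]

variable (n m : ℕ) (hn2 : 3 * m ≤ n + 1)

lemma prod_zero (f : Fin n → ℝ) (hind : isIndepSet (pathGraph n) (Function.support f))
    (i : Fin m) : f (Afn n m hn2 i) = 0 ∨ f (Bfn n m hn2 i) = 0 := by
  by_contra h
  push_neg at h
  obtain ⟨h1, h2⟩ := h
  have hadjAB : (pathGraph n).Adj (Afn n m hn2 i) (Bfn n m hn2 i) :=
    pathGraph_adj.mpr (Or.inl rfl)
  exact hind h1 h2 (Afn_ne_Bfn n m hn2 i i) hadjAB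

lemma abs_pair (f : Fin n → ℝ) (hpos : ∀ u, 0 ≤ f u)
    (hind : isIndepSet (pathGraph n) (Function.support f)) (i : Fin m) :
    |f (Afn n m hn2 i) - f (Bfn n m hn2 i)| = f (Afn n m hn2 i) + f (Bfn n m hn2 i) := by
  rcases prod_zero n m hn2 f hind i with h | h
  · rw [h, zero_sub, abs_neg, abs_of_nonneg (hpos _), zero_add]
  · rw [h, sub_zero, abs_of_nonneg (hpos _), add_zero]

lemma max_pair_A (f : Fin n → ℝ) (hpos : ∀ u, 0 ≤ f u)
    (hind : isIndepSet (pathGraph n) (Function.support f)) (i : Fin m) :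
    max (f (Afn n m hn2 i) - f (Bfn n m hn2 i)) 0 = f (Afn n m hn2 i) := by
  rcases prod_zero n m hn2 f hind i with h | h
  · rw [h, zero_sub, max_eq_right (neg_nonpos.mpr (hpos _))]
  · rw [h, sub_zero, max_eq_left (hpos _)]

lemma max_pair_B (f : Fin n → ℝ) (hpos : ∀ u, 0 ≤ f u)
    (hind : isIndepSet (pathGraph n) (Function.support f)) (i : Fin m) :
    max (-(f (Afn n m hn2 i) - f (Bfn n m hn2 i))) 0 = f (Bfn n m hn2 i) := by
  rw [neg_sub]
  rcases prod_zero n m hn2 f hind i with h | h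
  · rw [h, sub_zero, max_eq_left (hpos _)]
  · rw [h, zero_sub, max_eq_right (neg_nonpos.mpr (hpos _))]

lemma supp_zero_of_mod (f : Fin n → ℝ)
    (hsub : Function.support f ⊆ {v : Fin n | (v : ℕ) % 3 ≠ 2}) :
    ∀ u : Fin n, (u : ℕ) % 3 = 2 → f u = 0 := by
  intro u hu
  by_contra h
  exact absurd hu (hsub h)

lemma l1_one (hn1 : n ≤ 3 * m) (f : Fin n → ℝ)
    (hf : f ∈ indRealizationIn (pathGraph n) {v : Fin n | (v : ℕ) % 3 ≠ 2}) :
    ∑ i, |xmap n m hn2 f i| = 1 := by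
  obtain ⟨hpos, -, hsub, hind, hsum⟩ := hf
  have h1 : ∀ i ∈ Finset.univ, |xmap n m hn2 f i| =
      f (Afn n m hn2 i) + f (Bfn n m hn2 i) := by
    intro i _
    rw [xmap_apply]
    exact abs_pair n m hn2 f hpos hind i
  rw [Finset.sum_congr rfl h1, ← sum_pairs n m hn2 hn1 f (supp_zero_of_mod n f hsub),
    ← finsum_eq_sum_of_fintype]
  exact hsum

lemma xmap_ne_zero (hn1 : n ≤ 3 * m) (f : Fin n → ℝ)
    (hf : f ∈ indRealizationIn (pathGraph n) {v : Fin n | (v : ℕ) % 3 ≠ 2}) :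
    xmap n m hn2 f ≠ 0 := by
  intro h
  have := l1_one n m hn2 hn1 f hf
  rw [h] at this
  simp only [PiLp.zero_apply, abs_zero, Finset.sum_const_zero] at this
  norm_num at this

end SphereMain

section SphereMain2

open SimpleGraph

lemma sphere_he (n m : ℕ) (hn2 : 3 * m ≤ n + 1) (hn1 : n ≤ 3 * m) :
    Nonempty (ContinuousMap.HomotopyEquiv
      ↥(indRealizationIn (pathGraph n) {v : Fin n | (v : ℕ) % 3 ≠ 2})
      ↥(sphere' m)) := by
  classical
  set Sig := indRealizationIn (pathGraph n) {v : Fin n | (v : ℕ) % 3 ≠ 2} with hSig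
  have hN : ∀ f : ↥Sig, 0 < ‖xmap n m hn2 f.1‖ :=
    fun f => norm_pos_iff.mpr (xmap_ne_zero n m hn2 hn1 f.1 f.2)
  have hphimem : ∀ f : ↥Sig, (‖xmap n m hn2 f.1‖)⁻¹ • xmap n m hn2 f.1 ∈ sphere' m := by
    intro f
    show _ ∈ Metric.sphere 0 1
    rw [mem_sphere_zero_iff_norm, norm_smul, norm_inv, norm_norm]
    exact inv_mul_cancel₀ (ne_of_gt (hN f))
  have hyne : ∀ y : ↥(sphere' m), (y.1 : EuclideanSpace ℝ (Fin m)) ≠ 0 := by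
    intro y h
    have hy := mem_sphere_zero_iff_norm.mp y.2
    rw [h] at hy
    simp at hy
  have hLy : ∀ y : ↥(sphere' m), 0 < ∑ i, |y.1 i| := fun y => Lpos m y.1 (hyne y)
  -- ψ lands in the complex
  have hpsimem : ∀ y : ↥(sphere' m), psiFn n m hn2 y.1 ∈ Sig := by
    intro y
    have hL := hLy y
    have hsign : ∀ u : Fin n, psiFn n m hn2 y.1 u ≠ 0 →
        (∃ i, u = Afn n m hn2 i ∧ 0 < y.1 i) ∨ (∃ i, u = Bfn n m hn2 i ∧ y.1 i < 0) := by
      intro u hu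
      rcases classify n m hn2 hn1 u with ⟨i, rfl⟩ | ⟨i, rfl⟩ | h2
      · left
        refine ⟨i, rfl, ?_⟩
        rw [psiFn_A] at hu
        by_contra hle
        push_neg at hle
        rw [max_eq_right hle, zero_div] at hu
        exact hu rfl
      · right
        refine ⟨i, rfl, ?_⟩
        rw [psiFn_B] at hu
        by_contra hle
        push_neg at hle
        rw [max_eq_right (neg_nonpos.mpr hle), zero_div] at hu
        exact hu rfl
      · rw [psiFn_other n m hn2 y.1 u h2] at hu
        exact (hu rfl).elim
    refine ⟨?_, Set.toFinite _, ?_, ?_, ?_⟩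
    · intro u
      refine div_nonneg (Finset.sum_nonneg fun i _ => add_nonneg ?_ ?_) hL.le <;>
        · split
          · exact le_max_right _ _
          · exact le_rfl
    · intro u hu
      show u ∈ {v : Fin n | (v : ℕ) % 3 ≠ 2}
      intro h2
      exact hu (psiFn_other n m hn2 y.1 u h2)
    · intro a ha b hb hab hadj
      have ha' := hsign a ha
      have hb' := hsign b hb
      have hv := pathGraph_adj.mp hadj
      rcases ha' with ⟨i, rfl, hyi⟩ | ⟨i, rfl, hyi⟩ <;>
        rcases hb' with ⟨j, rfl, hyj⟩ | ⟨j, rfl, hyj⟩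
      · simp only [Afn_val] at hv; omega
      · simp only [Afn_val, Bfn_val] at hv
        have hij : (i : ℕ) = (j : ℕ) := by omega
        rw [Fin.ext hij] at hyi
        linarith
      · simp only [Afn_val, Bfn_val] at hv
        have hij : (i : ℕ) = (j : ℕ) := by omega
        rw [Fin.ext hij] at hyi
        linarith
      · simp only [Bfn_val] at hv; omega
    · rw [finsum_eq_sum_of_fintype,
        sum_pairs n m hn2 hn1 _ (fun u hu => psiFn_other n m hn2 y.1 u hu)]
      have h1 : ∀ j ∈ Finset.univ, psiFn n m hn2 y.1 (Afn n m hn2 j) +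
          psiFn n m hn2 y.1 (Bfn n m hn2 j) = |y.1 j| / (∑ i, |y.1 i|) := by
        intro j _
        rw [psiFn_A, psiFn_B, ← add_div, max_add_max_neg]
      rw [Finset.sum_congr rfl h1, ← Finset.sum_div, div_self (ne_of_gt hL)]
  -- left inverse
  have hleft : ∀ f : ↥Sig, psiFn n m hn2 ((‖xmap n m hn2 f.1‖)⁻¹ • xmap n m hn2 f.1) = f.1 := by
    intro f
    obtain ⟨hpos, -, hsub, hind, -⟩ := f.2
    have hNpos := hN f
    have hNne : ‖xmap n m hn2 f.1‖ ≠ 0 := ne_of_gt hNpos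
    have happ : ∀ i, ((‖xmap n m hn2 f.1‖)⁻¹ • xmap n m hn2 f.1) i =
        (‖xmap n m hn2 f.1‖)⁻¹ * xmap n m hn2 f.1 i := fun i => rfl
    have hLphi : ∑ i, |((‖xmap n m hn2 f.1‖)⁻¹ • xmap n m hn2 f.1) i| =
        (‖xmap n m hn2 f.1‖)⁻¹ := by
      have h1 : ∀ i ∈ Finset.univ, |((‖xmap n m hn2 f.1‖)⁻¹ • xmap n m hn2 f.1) i| =
          (‖xmap n m hn2 f.1‖)⁻¹ * |xmap n m hn2 f.1 i| := by
        intro i _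
        rw [happ, abs_mul, abs_of_pos (inv_pos.mpr hNpos)]
      rw [Finset.sum_congr rfl h1, ← Finset.mul_sum, l1_one n m hn2 hn1 f.1 f.2, mul_one]
    funext u
    rcases classify n m hn2 hn1 u with ⟨i, rfl⟩ | ⟨i, rfl⟩ | h2
    · rw [psiFn_A, hLphi, happ, xmap_apply,
        ← mul_max_zero _ _ (inv_nonneg.mpr hNpos.le),
        max_pair_A n m hn2 f.1 hpos hind i, mul_comm, mul_div_assoc,
        div_self (inv_ne_zero hNne), mul_one]
    · rw [psiFn_B, hLphi, happ, xmap_apply, ← mul_neg,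
        ← mul_max_zero _ _ (inv_nonneg.mpr hNpos.le),
        max_pair_B n m hn2 f.1 hpos hind i, mul_comm, mul_div_assoc,
        div_self (inv_ne_zero hNne), mul_one]
    · rw [psiFn_other n m hn2 _ u h2, supp_zero_of_mod n f.1 hsub u h2]
  -- right inverse
  have hright : ∀ y : ↥(sphere' m),
      (‖xmap n m hn2 (psiFn n m hn2 y.1)‖)⁻¹ • xmap n m hn2 (psiFn n m hn2 y.1) = y.1 := by
    intro y
    have hL := hLy y
    have hLne : (∑ i, |y.1 i|) ≠ 0 := ne_of_gt hL
    have hx : xmap n m hn2 (psiFn n m hn2 y.1) = (∑ i, |y.1 i|)⁻¹ • y.1 := by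
      ext i
      rw [xmap_apply, psiFn_A, psiFn_B, div_sub_div_same, max_sub_max_neg]
      show y.1 i / (∑ i, |y.1 i|) = (∑ i, |y.1 i|)⁻¹ * y.1 i
      rw [div_eq_inv_mul]
    have hnorm : ‖xmap n m hn2 (psiFn n m hn2 y.1)‖ = (∑ i, |y.1 i|)⁻¹ := by
      rw [hx, norm_smul, norm_inv, Real.norm_eq_abs, abs_of_pos hL,
        mem_sphere_zero_iff_norm.mp y.2, mul_one]
    rw [hnorm, hx, inv_inv, smul_smul, mul_inv_cancel₀ hLne, one_smul]
  -- continuity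
  have contSub : ∀ u : Fin n, Continuous (fun f : ↥Sig => f.1 u) :=
    fun u => (continuous_apply u).comp continuous_subtype_val
  have contx : Continuous (fun f : ↥Sig => xmap n m hn2 f.1) := by
    refine Continuous.comp (PiLp.continuous_toLp (p := 2) (β := fun _ : Fin m => ℝ)) ?_
    exact continuous_pi fun i => (contSub _).sub (contSub _)
  have contphi : Continuous (fun f : ↥Sig => (‖xmap n m hn2 f.1‖)⁻¹ • xmap n m hn2 f.1) :=
    Continuous.smul (Continuous.inv₀ contx.norm fun f => ne_of_gt (hN f)) contx
  have conty : ∀ i : Fin m, Continuous (fun y : ↥(sphere' m) => y.1 i) := by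
    intro i
    exact (continuous_apply i).comp
      ((PiLp.continuous_ofLp (p := 2) (β := fun _ : Fin m => ℝ)).comp continuous_subtype_val)
  have contL : Continuous (fun y : ↥(sphere' m) => ∑ i, |y.1 i|) :=
    continuous_finset_sum _ fun i _ => (conty i).abs
  have contpsi : Continuous (fun y : ↥(sphere' m) => psiFn n m hn2 y.1) := by
    unfold psiFn
    refine continuous_pi fun u => ?_
    refine Continuous.div (continuous_finset_sum _ fun i _ => ?_) contL
      (fun y => ne_of_gt (hLy y))
    refine Continuous.add ?_ ?_
    · by_cases h : u = Afn n m hn2 i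
      · simp only [if_pos h]
        exact (conty i).max continuous_const
      · simp only [if_neg h]
        exact continuous_const
    · by_cases h : u = Bfn n m hn2 i
      · simp only [if_pos h]
        exact (conty i).neg.max continuous_const
      · simp only [if_neg h]
        exact continuous_const
  refine ⟨Homeomorph.toHomotopyEquiv ?_⟩
  exact
    { toEquiv :=
        { toFun := fun f => ⟨(‖xmap n m hn2 f.1‖)⁻¹ • xmap n m hn2 f.1, hphimem f⟩
          invFun := fun y => ⟨psiFn n m hn2 y.1, hpsimem y⟩
          left_inv := fun f => Subtype.ext (hleft f)
          right_inv := fun y => Subtype.ext (hright y) }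
      continuous_toFun := contphi.subtype_mk _
      continuous_invFun := contpsi.subtype_mk _ }

end SphereMain2


/-- homotopy type of the independence complex of the path `P_n`:
`S^{k-1}` if `n = 3k`, a point if `n = 3k+1`, and `S^k` if `n = 3k+2`. -/
theorem ind_pathGraph (n k : ℕ) :
    (n = 3 * k → Nonempty (ContinuousMap.HomotopyEquiv
      (↥(indRealization (SimpleGraph.pathGraph n))) (↥(sphere' k)))) ∧
    (n = 3 * k + 1 → ContractibleSpace (↥(indRealization (SimpleGraph.pathGraph n)))) ∧
    (n = 3 * k + 2 → Nonempty (ContinuousMap.HomotopyEquiv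
      (↥(indRealization (SimpleGraph.pathGraph n))) (↥(sphere' (k + 1))))) := by
  refine ⟨?_, ?_, ?_⟩
  · rintro rfl
    obtain ⟨e1⟩ := he_final (3 * k) k (by omega) (by omega)
    obtain ⟨e2⟩ := sphere_he (3 * k) k (by omega) (by omega)
    exact ⟨e1.trans e2⟩
  · rintro rfl
    have hc := contractible_final k
    obtain ⟨e1⟩ := he_final (3 * k + 1) k (by omega) (by omega)
    exact e1.contractibleSpace
  · rintro rfl
    obtain ⟨e1⟩ := he_final (3 * k + 2) k (by omega) (by omega)
    obtain ⟨e2⟩ := sphere_he (3 * k + 2) (k + 1) (by omega) (by omega)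
    exact ⟨e1.trans e2⟩
end

section
/- For n ≥ 1, the independence complex of the graph X_n^{(2)} = H_{1×1×n} \ N[v^1_{2n+1}] is homotopy equivalent to the sphere S^{n-1}. -/
open Function Set

section Fold

set_option linter.unusedSectionVars false

variable {V : Type*} [Fintype V] [DecidableEq V]

def push (u w : V) (t : ℝ) (x : V → ℝ) : V → ℝ := fun p =>
  if p = w then t * x w else if p = u then x u + (1 - t) * x w else x p

lemma push_eq_update (u w : V) (t : ℝ) (x : V → ℝ) (huw : u ≠ w) :
    push u w t x = Function.update (Function.update x u (x u + (1 - t) * x w)) w (t * x w) := by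
  funext p
  by_cases h1 : p = w
  · subst h1; simp [push, Function.update, huw.symm]
  · by_cases h2 : p = u <;> simp [push, Function.update, h1, h2]

lemma push_one (u w : V) (x : V → ℝ) (huw : u ≠ w) : push u w 1 x = x := by
  funext p
  unfold push
  split_ifs with h1 h2
  · subst h1; ring
  · subst h2; ring
  · rfl

lemma push_of_eq_zero (u w : V) (t : ℝ) (x : V → ℝ) (hxw : x w = 0) : push u w t x = x := by
  funext p
  unfold push
  split_ifs with h1 h2
  · subst h1; rw [hxw]; ring
  · subst h2; rw [hxw]; ring
  · rfl

lemma push_sum (u w : V) (t : ℝ) (x : V → ℝ) (huw : u ≠ w) :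
    ∑ p, push u w t x p = ∑ p, x p := by
  rw [push_eq_update u w t x huw]
  rw [Finset.sum_update_of_mem (Finset.mem_univ w)]
  rw [Finset.sum_update_of_mem (by simp [huw] : u ∈ Finset.univ \ {w})]
  have h1 : ∑ p, x p = x w + ∑ p ∈ Finset.univ \ {w}, x p := by
    rw [← Finset.sum_update_of_mem (Finset.mem_univ w)]
    congr 1; funext p
    by_cases h : p = w <;> simp [Function.update, h]
  have h2 : ∑ p ∈ Finset.univ \ {w}, x p = x u + ∑ p ∈ (Finset.univ \ {w}) \ {u}, x p := by
    rw [← Finset.sum_update_of_mem (by simp [huw] : u ∈ Finset.univ \ {w})]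
    congr 1; funext p
    by_cases h : p = u <;> simp [Function.update, h]
  rw [h1, h2]; ring

lemma push_support (u w : V) (t : ℝ) (x : V → ℝ) :
    support (push u w t x) ⊆ insert u (support x) := by
  intro p hp
  simp only [mem_support, push] at hp
  by_cases h1 : p = w
  · rw [if_pos h1] at hp
    right
    intro h
    rw [h1] at h
    rw [h, mul_zero] at hp
    exact hp rfl
  · rw [if_neg h1] at hp
    by_cases h2 : p = u
    · exact Or.inl h2
    · rw [if_neg h2] at hp
      exact Or.inr hp

lemma push_mem {G : SimpleGraph V} {S : Set V} {u w : V} (hu : u ∈ S) (hw : w ∈ S)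
    (huw : u ≠ w) (hdom : ∀ x ∈ S, G.Adj u x → G.Adj w x)
    {x : V → ℝ} (hx : x ∈ indRealizationIn G S) {t : ℝ} (ht0 : 0 ≤ t) (ht1 : t ≤ 1) :
    push u w t x ∈ indRealizationIn G S := by
  obtain ⟨hpos, hfin, hsub, hind, hsum⟩ := hx
  by_cases hxw : x w = 0
  · rw [push_of_eq_zero u w t x hxw]
    exact ⟨hpos, hfin, hsub, hind, hsum⟩
  have hwsupp : w ∈ support x := hxw
  have hsymm : Symmetric fun a b : V => ¬ G.Adj a b := fun a b hab h => hab h.symm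
  have hins : isIndepSet G (insert u (support x)) := by
    haveI : Std.Symm (fun a b : V => ¬ G.Adj a b) := ⟨fun a b h => hsymm h⟩
    rw [isIndepSet, Set.pairwise_insert_of_symm]
    refine ⟨hind, fun b hb hne hadj => ?_⟩
    have hwb : G.Adj w b := hdom b (hsub hb) hadj
    by_cases hbw : b = w
    · exact G.irrefl (hbw ▸ hwb)
    · exact hind hwsupp hb (fun h => hbw h.symm) hwb
  refine ⟨?_, Set.toFinite _, ?_, ?_, ?_⟩
  · intro p
    unfold push
    split_ifs with h1 h2
    · exact mul_nonneg ht0 (hpos w)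
    · exact add_nonneg (hpos u) (mul_nonneg (by linarith) (hpos w))
    · exact hpos p
  · exact (push_support u w t x).trans (Set.insert_subset hu hsub)
  · exact Set.Pairwise.mono (push_support u w t x) hins
  · rw [finsum_eq_sum_of_fintype, push_sum u w t x huw, ← finsum_eq_sum_of_fintype]
    exact hsum

lemma push_zero_mem {G : SimpleGraph V} {S : Set V} {u w : V} (hu : u ∈ S) (hw : w ∈ S)
    (huw : u ≠ w) (hdom : ∀ x ∈ S, G.Adj u x → G.Adj w x)
    {x : V → ℝ} (hx : x ∈ indRealizationIn G S) :
    push u w 0 x ∈ indRealizationIn G (S \ {w}) := by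
  obtain ⟨hpos, hfin, hsub, hind, hsum⟩ := push_mem hu hw huw hdom hx le_rfl zero_le_one
  refine ⟨hpos, hfin, fun p hp => ⟨hsub hp, ?_⟩, hind, hsum⟩
  intro hpw
  simp only [Set.mem_singleton_iff] at hpw
  subst hpw
  simp [mem_support, push] at hp

lemma indRealizationIn_mono {G : SimpleGraph V} {S S' : Set V} (h : S ⊆ S') :
    indRealizationIn G S ⊆ indRealizationIn G S' :=
  fun _ ⟨h1, h2, h3, h4, h5⟩ => ⟨h1, h2, h3.trans h, h4, h5⟩

lemma push_zero_of_mem_diff {G : SimpleGraph V} {S : Set V} {u w : V}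
    {x : V → ℝ} (hx : x ∈ indRealizationIn G (S \ {w})) : push u w 0 x = x := by
  apply push_of_eq_zero
  by_contra h
  exact (hx.2.2.1 h).2 rfl

variable (G : SimpleGraph V) (S : Set V) (u w : V)

lemma push_cont (p : V) :
    Continuous fun q : unitInterval × ↥(indRealizationIn G S) =>
      push u w (q.1 : ℝ) (q.2 : V → ℝ) p := by
  have ht : Continuous fun q : unitInterval × ↥(indRealizationIn G S) => (q.1 : ℝ) :=
    continuous_subtype_val.comp continuous_fst
  have hx : ∀ r : V, Continuous fun q : unitInterval × ↥(indRealizationIn G S) =>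
      (q.2 : V → ℝ) r := fun r =>
    (continuous_apply r).comp (continuous_subtype_val.comp continuous_snd)
  unfold push
  split_ifs with h1 h2
  · exact ht.mul (hx w)
  · exact (hx u).add ((continuous_const.sub ht).mul (hx w))
  · exact hx p

noncomputable def foldF (hu : u ∈ S) (hw : w ∈ S)
    (huw : u ≠ w) (hdom : ∀ x ∈ S, G.Adj u x → G.Adj w x) : C(↥(indRealizationIn G S), ↥(indRealizationIn G (S \ {w}))) :=
  ⟨fun x => ⟨push u w 0 x, push_zero_mem hu hw huw hdom x.2⟩, by
    apply Continuous.subtype_mk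
    apply continuous_pi
    intro p
    have hx : ∀ r : V, Continuous fun x : ↥(indRealizationIn G S) =>
        (x : V → ℝ) r := fun r => (continuous_apply r).comp continuous_subtype_val
    unfold push
    split_ifs with h1 h2
    · exact continuous_const.mul (hx w)
    · exact (hx u).add (continuous_const.mul (hx w))
    · exact hx p⟩

noncomputable def foldG (w : V) : C(↥(indRealizationIn G (S \ {w})), ↥(indRealizationIn G S)) :=
  ⟨fun y => ⟨(y : V → ℝ), indRealizationIn_mono Set.diff_subset y.2⟩,
    Continuous.subtype_mk continuous_subtype_val _⟩

noncomputable def foldEquiv (hu : u ∈ S) (hw : w ∈ S)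
    (huw : u ≠ w) (hdom : ∀ x ∈ S, G.Adj u x → G.Adj w x) :
    ContinuousMap.HomotopyEquiv ↥(indRealizationIn G S) ↥(indRealizationIn G (S \ {w})) where
  toFun := foldF G S u w hu hw huw hdom
  invFun := foldG G S w
  left_inv := by
    refine ⟨⟨⟨fun q => ⟨push u w (q.1 : ℝ) (q.2 : V → ℝ),
        push_mem hu hw huw hdom q.2.2 q.1.2.1 q.1.2.2⟩, ?_⟩, ?_, ?_⟩⟩
    · exact Continuous.subtype_mk (continuous_pi (push_cont G S u w)) _
    · intro x
      exact Subtype.ext rfl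
    · intro x
      exact Subtype.ext (push_one u w (x : V → ℝ) huw)
  right_inv := by
    have h : (foldF G S u w hu hw huw hdom).comp (foldG G S w) = ContinuousMap.id _ := by
      ext y
      exact congrArg (fun f : V → ℝ => f _)
        (push_zero_of_mem_diff (u := u) (S := S) y.2)
    rw [h]
end Fold

lemma hexRow_adj (n : ℕ) (p q : Fin 2 × Fin (2 * n + 1)) :
    (hexRow n).Adj p q ↔
      (((p.1 : ℕ) = q.1 ∧ ((p.2 : ℕ) + 1 = q.2 ∨ (q.2 : ℕ) + 1 = p.2)) ∨
       ((p.1 : ℕ) ≠ q.1 ∧ (p.2 : ℕ) = q.2 ∧ (p.2 : ℕ) % 2 = 0)) := by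
  obtain ⟨⟨j, hj⟩, ⟨c, hc⟩⟩ := p
  obtain ⟨⟨j', hj'⟩, ⟨c', hc'⟩⟩ := q
  simp only [hexRow, SimpleGraph.fromRel_adj, ne_eq, Prod.mk.injEq, Prod.ext_iff, Fin.mk.injEq,
    not_and, Fin.ext_iff, Fin.val_mk]
  omega

/-- The vertex set kept after `k` macro folding steps. -/
def SK (n k : ℕ) : Set (Fin 2 × Fin (2 * n + 1)) :=
  {p | ((p.2 : ℕ) + 1 < 2 * (n - k)) ∨
       (((p.1 : ℕ) + k) % 2 = 1 ∧ (p.2 : ℕ) + 1 = 2 * (n - k)) ∨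
       (2 * (n - k) ≤ (p.2 : ℕ) ∧ (p.2 : ℕ) < 2 * n ∧
        ((p.1 : ℕ) + (n - 1 - (p.2 : ℕ) / 2)) % 2 = 1)}

lemma SK_zero (n : ℕ) : ((insert (hexTop n) ((hexRow n).neighborSet (hexTop n)))ᶜ : Set _) = SK n 0 := by
  ext ⟨⟨j, hj⟩, ⟨c, hc⟩⟩
  simp only [SK, hexTop, Set.mem_compl_iff, Set.mem_insert_iff, SimpleGraph.mem_neighborSet,
    hexRow_adj, Set.mem_setOf_eq, Prod.mk.injEq, Prod.ext_iff, Fin.ext_iff, Fin.val_mk,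
    Fin.val_zero, ne_eq, not_or, not_and]
  omega

def uK (n k : ℕ) : Fin 2 × Fin (2 * n + 1) :=
  (⟨(k + 1) % 2, by omega⟩, ⟨2 * (n - k) - 1, by omega⟩)

def w1K (n k : ℕ) : Fin 2 × Fin (2 * n + 1) :=
  (⟨k % 2, by omega⟩, ⟨2 * (n - k) - 2, by omega⟩)

def w2K (n k : ℕ) : Fin 2 × Fin (2 * n + 1) :=
  (⟨(k + 1) % 2, by omega⟩, ⟨2 * (n - k) - 3, by omega⟩)

lemma fold1_hyps (n k : ℕ) (hk : k < n) :
    uK n k ∈ SK n k ∧ w1K n k ∈ SK n k ∧ uK n k ≠ w1K n k ∧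
      ∀ x ∈ SK n k, (hexRow n).Adj (uK n k) x → (hexRow n).Adj (w1K n k) x := by
  refine ⟨?_, ?_, ?_, ?_⟩
  · simp only [SK, uK, Set.mem_setOf_eq, Fin.val_mk]; omega
  · simp only [SK, w1K, Set.mem_setOf_eq, Fin.val_mk]; omega
  · simp only [uK, w1K, ne_eq, Prod.ext_iff, Fin.ext_iff, Fin.val_mk, not_and]; omega
  · rintro ⟨⟨j, hj⟩, ⟨c, hc⟩⟩ hmem hadj
    simp only [SK, Set.mem_setOf_eq, Fin.val_mk] at hmem
    rw [hexRow_adj] at hadj ⊢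
    simp only [uK, w1K, Fin.val_mk, ne_eq] at hadj ⊢
    omega

lemma fold2_hyps (n k : ℕ) (hk : k + 1 < n) :
    uK n k ∈ SK n k \ {w1K n k} ∧ w2K n k ∈ SK n k \ {w1K n k} ∧ uK n k ≠ w2K n k ∧
      ∀ x ∈ SK n k \ {w1K n k}, (hexRow n).Adj (uK n k) x → (hexRow n).Adj (w2K n k) x := by
  refine ⟨⟨?_, ?_⟩, ⟨?_, ?_⟩, ?_, ?_⟩
  · simp only [SK, uK, Set.mem_setOf_eq, Fin.val_mk]; omega
  · simp only [uK, w1K, Set.mem_singleton_iff, Prod.ext_iff, Fin.ext_iff, Fin.val_mk, not_and]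
    omega
  · simp only [SK, w2K, Set.mem_setOf_eq, Fin.val_mk]; omega
  · simp only [w2K, w1K, Set.mem_singleton_iff, Prod.ext_iff, Fin.ext_iff, Fin.val_mk, not_and]
    omega
  · simp only [uK, w2K, ne_eq, Prod.ext_iff, Fin.ext_iff, Fin.val_mk, not_and]; omega
  · rintro ⟨⟨j, hj⟩, ⟨c, hc⟩⟩ ⟨hmem, hne⟩ hadj
    simp only [SK, Set.mem_setOf_eq, Fin.val_mk] at hmem
    simp only [w1K, Set.mem_singleton_iff, Prod.ext_iff, Fin.ext_iff, Fin.val_mk, not_and] at hne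
    rw [hexRow_adj] at hadj ⊢
    simp only [uK, w2K, Fin.val_mk, ne_eq] at hadj ⊢
    omega

lemma SK_step (n k : ℕ) (hk : k + 1 < n) :
    (SK n k \ {w1K n k}) \ {w2K n k} = SK n (k + 1) := by
  ext ⟨⟨j, hj⟩, ⟨c, hc⟩⟩
  simp only [SK, w1K, w2K, Set.mem_diff, Set.mem_setOf_eq, Set.mem_singleton_iff, Prod.ext_iff,
    Fin.ext_iff, Fin.val_mk, not_and]
  omega

lemma SK_last (n : ℕ) (hn : 1 ≤ n) :
    SK n (n - 1) \ {w1K n (n - 1)} = SK n n := by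
  ext ⟨⟨j, hj⟩, ⟨c, hc⟩⟩
  simp only [SK, w1K, Set.mem_diff, Set.mem_setOf_eq, Set.mem_singleton_iff, Prod.ext_iff,
    Fin.ext_iff, Fin.val_mk, not_and]
  omega

section Sphere

variable (n : ℕ)

/-- the `d`-th endpoint of the `m`-th matching edge -/
def vert (m : Fin n) (d : Fin 2) : Fin 2 × Fin (2 * n + 1) :=
  (⟨(n - (m : ℕ)) % 2, by omega⟩, ⟨2 * (m : ℕ) + (d : ℕ), by have := m.isLt; have := d.isLt; omega⟩)

lemma mem_SK_n (p : Fin 2 × Fin (2 * n + 1)) :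
    p ∈ SK n n ↔ ((p.2 : ℕ) < 2 * n ∧ ((p.1 : ℕ) + (n - 1 - (p.2 : ℕ) / 2)) % 2 = 1) := by
  obtain ⟨⟨j, hj⟩, ⟨c, hc⟩⟩ := p
  simp only [SK, Set.mem_setOf_eq, Fin.val_mk]
  omega

lemma vert_mem (m : Fin n) (d : Fin 2) : vert n m d ∈ SK n n := by
  rw [mem_SK_n]
  simp only [vert, Fin.val_mk]
  have := m.isLt; have := d.isLt
  omega

lemma SK_n_eq_range : SK n n = Set.range (fun q : Fin n × Fin 2 => vert n q.1 q.2) := by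
  ext p
  rw [mem_SK_n]
  constructor
  · rintro ⟨h1, h2⟩
    have hj := p.1.isLt
    refine ⟨(⟨(p.2 : ℕ) / 2, by omega⟩, ⟨(p.2 : ℕ) % 2, by omega⟩), ?_⟩
    simp only [vert]
    refine Prod.ext (Fin.ext ?_) (Fin.ext ?_) <;> simp only [Fin.val_mk] <;> omega
  · rintro ⟨q, rfl⟩
    have h := vert_mem n q.1 q.2
    rw [mem_SK_n] at h
    exact h

lemma vert_inj : Function.Injective (fun q : Fin n × Fin 2 => vert n q.1 q.2) := by
  rintro ⟨m, d⟩ ⟨m', d'⟩ h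
  have h' : vert n m d = vert n m' d' := h
  simp only [vert, Prod.mk.injEq, Fin.mk.injEq] at h'
  have := d.isLt; have := d'.isLt
  refine Prod.ext (Fin.ext ?_) (Fin.ext ?_) <;> simp only [] <;> omega

lemma sum_over_matching (f : Fin 2 × Fin (2 * n + 1) → ℝ)
    (hf : ∀ p, f p ≠ 0 → p ∈ SK n n) :
    ∑ p, f p = ∑ m : Fin n, (f (vert n m 0) + f (vert n m 1)) := by
  classical
  have h1 : ∑ p, f p = ∑ p ∈ Finset.image (fun q : Fin n × Fin 2 => vert n q.1 q.2)
      Finset.univ, f p := by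
    refine (Finset.sum_subset (Finset.subset_univ _) ?_).symm
    intro p _ hp
    by_contra h
    have := hf p h
    rw [SK_n_eq_range] at this
    obtain ⟨q, hq⟩ := this
    exact hp (Finset.mem_image.2 ⟨q, Finset.mem_univ q, hq⟩)
  rw [h1, Finset.sum_image (fun a _ b _ h => vert_inj n h)]
  rw [Fintype.sum_prod_type]
  exact Finset.sum_congr rfl fun m _ => by rw [Fin.sum_univ_two]

lemma vert_adj (m : Fin n) : (hexRow n).Adj (vert n m 0) (vert n m 1) := by
  rw [hexRow_adj]
  simp [vert]

/-- for a member of the realization, at most one endpoint of each edge carries weight -/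
lemma edge_zero {f : Fin 2 × Fin (2 * n + 1) → ℝ}
    (hf : f ∈ indRealizationIn (hexRow n) (SK n n)) (m : Fin n) :
    f (vert n m 0) = 0 ∨ f (vert n m 1) = 0 := by
  by_contra h
  push_neg at h
  have hne : vert n m 0 ≠ vert n m 1 := (hexRow n).ne_of_adj (vert_adj n m)
  exact hf.2.2.2.1 h.1 h.2 hne (vert_adj n m)

noncomputable def Phi (f : Fin 2 × Fin (2 * n + 1) → ℝ) : EuclideanSpace ℝ (Fin n) :=
  (EuclideanSpace.equiv (Fin n) ℝ).symm fun m => f (vert n m 0) - f (vert n m 1)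

lemma Phi_apply (f : Fin 2 × Fin (2 * n + 1) → ℝ) (m : Fin n) :
    Phi n f m = f (vert n m 0) - f (vert n m 1) := rfl

lemma Phi_sum_abs {f : Fin 2 × Fin (2 * n + 1) → ℝ}
    (hf : f ∈ indRealizationIn (hexRow n) (SK n n)) :
    ∑ m : Fin n, |Phi n f m| = 1 := by
  have h1 : ∀ m : Fin n, |Phi n f m| = f (vert n m 0) + f (vert n m 1) := by
    intro m
    rw [Phi_apply]
    rcases edge_zero n hf m with h | h <;> rw [h]
    · rw [zero_sub, abs_neg, abs_of_nonneg (hf.1 _), zero_add]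
    · rw [sub_zero, abs_of_nonneg (hf.1 _), add_zero]
  rw [Finset.sum_congr rfl fun m _ => h1 m]
  rw [← sum_over_matching n f (fun p hp => hf.2.2.1 hp)]
  rw [← finsum_eq_sum_of_fintype]
  exact hf.2.2.2.2

lemma Phi_norm_pos {f : Fin 2 × Fin (2 * n + 1) → ℝ}
    (hf : f ∈ indRealizationIn (hexRow n) (SK n n)) : 0 < ‖Phi n f‖ := by
  rw [norm_pos_iff]
  intro h
  have := Phi_sum_abs n hf
  rw [h] at this
  simp at this

noncomputable def phiMap (f : ↥(indRealizationIn (hexRow n) (SK n n))) : ↥(sphere' n) :=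
  ⟨‖Phi n (f : _ → ℝ)‖⁻¹ • Phi n (f : _ → ℝ), by
    have h := Phi_norm_pos n f.2
    simp only [sphere', Metric.mem_sphere, dist_zero_right, norm_smul, norm_inv, norm_norm]
    exact inv_mul_cancel₀ (ne_of_gt h)⟩

noncomputable def psiF (y : EuclideanSpace ℝ (Fin n)) (N : ℝ) :
    (Fin 2 × Fin (2 * n + 1)) → ℝ := fun p =>
  if h : (p.2 : ℕ) < 2 * n then
    if (p.1 : ℕ) = (n - (p.2 : ℕ) / 2) % 2 then
      (if (p.2 : ℕ) % 2 = 0 then max (y ⟨(p.2 : ℕ) / 2, by omega⟩) 0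
       else max (-(y ⟨(p.2 : ℕ) / 2, by omega⟩)) 0) / N
    else 0
  else 0

lemma psiF_vert0 (y : EuclideanSpace ℝ (Fin n)) (N : ℝ) (m : Fin n) :
    psiF n y N (vert n m 0) = max (y m) 0 / N := by
  have hm := m.isLt
  simp only [psiF, vert, Fin.val_mk, Fin.val_zero, add_zero]
  rw [dif_pos (by omega)]
  rw [if_pos (by omega)]
  rw [if_pos (by omega)]
  apply congrArg (fun z : ℝ => (z ⊔ 0) / N)
  apply congrArg y
  apply Fin.ext
  show (2 * (m : ℕ) + 0) / 2 = (m : ℕ)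
  omega

lemma psiF_vert1 (y : EuclideanSpace ℝ (Fin n)) (N : ℝ) (m : Fin n) :
    psiF n y N (vert n m 1) = max (-(y m)) 0 / N := by
  have hm := m.isLt
  simp only [psiF, vert, Fin.val_mk, Fin.val_one]
  erw [dif_pos (show 2 * (m : ℕ) + 1 < 2 * n by omega)]
  erw [if_pos (by omega)]
  erw [if_neg (by omega)]
  apply congrArg (fun z : ℝ => (-z ⊔ 0) / N)
  apply congrArg y
  apply Fin.ext
  show (2 * (m : ℕ) + 1) / 2 = (m : ℕ)
  omega

lemma psiF_support {y : EuclideanSpace ℝ (Fin n)} {N : ℝ} {p : Fin 2 × Fin (2 * n + 1)}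
    (hp : psiF n y N p ≠ 0) : p ∈ SK n n := by
  rw [mem_SK_n]
  by_contra h
  apply hp
  unfold psiF
  by_cases h1 : (p.2 : ℕ) < 2 * n
  · rw [dif_pos h1]
    rw [if_neg ?_]
    have hj := p.1.isLt
    omega
  · rw [dif_neg h1]

lemma psiF_mem {y : EuclideanSpace ℝ (Fin n)} {N : ℝ} (hN : 0 < N)
    (hsum : ∑ m : Fin n, |y m| = N) :
    psiF n y N ∈ indRealizationIn (hexRow n) (SK n n) := by
  refine ⟨?_, Set.toFinite _, ?_, ?_, ?_⟩
  · intro p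
    unfold psiF
    split_ifs with h1 h2 h3
    · exact div_nonneg (le_max_right _ _) hN.le
    · exact div_nonneg (le_max_right _ _) hN.le
    · exact le_rfl
    · exact le_rfl
  · exact fun p hp => psiF_support n hp
  · -- independence
    intro p hp q hq hpq hadj
    have hpS := psiF_support n hp
    have hqS := psiF_support n hq
    rw [mem_SK_n] at hpS hqS
    -- extract sign facts
    have key : ∀ r : Fin 2 × Fin (2 * n + 1), psiF n y N r ≠ 0 →
        (r.2 : ℕ) < 2 * n ∧ (r.1 : ℕ) = (n - (r.2 : ℕ) / 2) % 2 ∧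
          ∃ m : Fin n, (m : ℕ) = (r.2 : ℕ) / 2 ∧
          (((r.2 : ℕ) % 2 = 0 ∧ 0 < y m) ∨ ((r.2 : ℕ) % 2 = 1 ∧ y m < 0)) := by
      intro r hr
      unfold psiF at hr
      by_cases h1 : (r.2 : ℕ) < 2 * n
      · rw [dif_pos h1] at hr
        refine ⟨h1, ?_⟩
        by_cases h2 : (r.1 : ℕ) = (n - (r.2 : ℕ) / 2) % 2
        · rw [if_pos h2] at hr
          refine ⟨h2, ⟨(r.2 : ℕ) / 2, by omega⟩, rfl, ?_⟩
          by_cases h3 : (r.2 : ℕ) % 2 = 0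
          · rw [if_pos h3] at hr
            left
            refine ⟨h3, ?_⟩
            by_contra hy
            push_neg at hy
            exact hr (by rw [max_eq_right hy, zero_div])
          · rw [if_neg h3] at hr
            right
            refine ⟨by omega, ?_⟩
            by_contra hy
            push_neg at hy
            exact hr (by rw [max_eq_right (by linarith), zero_div])
        · exact absurd (if_neg h2) (fun he => hr (he ▸ rfl))
      · exact absurd (dif_neg h1) (fun he => hr (he ▸ rfl))
    obtain ⟨hp1, hp2, mp, hmp, hp3⟩ := key p hp
    obtain ⟨hq1, hq2, mq, hmq, hq3⟩ := key q hq
    clear key hp hq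
    rw [hexRow_adj] at hadj
    by_cases hm : (p.2 : ℕ) / 2 = (q.2 : ℕ) / 2
    · have hfin : mp = mq := Fin.ext (by omega)
      by_cases hpar : (p.2 : ℕ) % 2 = (q.2 : ℕ) % 2
      · apply hpq
        have hc : (p.2 : ℕ) = (q.2 : ℕ) := by omega
        have hrow : (p.1 : ℕ) = (q.1 : ℕ) := by rw [hp2, hq2, hc]
        exact Prod.ext (Fin.ext hrow) (Fin.ext hc)
      · rw [hfin] at hp3
        rcases hp3 with ⟨he, hy⟩ | ⟨he, hy⟩ <;> rcases hq3 with ⟨he', hy'⟩ | ⟨he', hy'⟩ <;>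
          first
          | omega
          | linarith
    · -- different edges: adjacency impossible
      have hj := p.1.isLt
      have hj' := q.1.isLt
      omega
  · -- sum
    rw [finsum_eq_sum_of_fintype,
      sum_over_matching n _ (fun p hp => psiF_support n hp)]
    have : ∀ m : Fin n, psiF n y N (vert n m 0) + psiF n y N (vert n m 1) = |y m| / N := by
      intro m
      rw [psiF_vert0, psiF_vert1, ← add_div, max_zero_add_max_neg_zero_eq_abs_self]
    rw [Finset.sum_congr rfl fun m _ => this m, ← Finset.sum_div, hsum,
      div_self (ne_of_gt hN)]

noncomputable def NyFun (y : EuclideanSpace ℝ (Fin n)) : ℝ := ∑ m : Fin n, |y m|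

lemma Ny_pos {y : EuclideanSpace ℝ (Fin n)} (hy : y ∈ sphere' n) : 0 < NyFun n y := by
  have hy' : y ≠ 0 := by
    intro h
    rw [sphere', Metric.mem_sphere, h, dist_self] at hy
    norm_num at hy
  have : ∃ m : Fin n, y m ≠ 0 := by
    by_contra h
    push_neg at h
    exact hy' (by ext m; exact h m)
  obtain ⟨m, hm⟩ := this
  exact Finset.sum_pos' (fun i _ => abs_nonneg _) ⟨m, Finset.mem_univ m, abs_pos.2 hm⟩

noncomputable def psiMap (y : ↥(sphere' n)) : ↥(indRealizationIn (hexRow n) (SK n n)) :=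
  ⟨psiF n (y : EuclideanSpace ℝ (Fin n)) (NyFun n (y : EuclideanSpace ℝ (Fin n))),
    psiF_mem n (Ny_pos n y.2) rfl⟩

lemma Phi_psiF (y : EuclideanSpace ℝ (Fin n)) (N : ℝ) :
    Phi n (psiF n y N) = N⁻¹ • y := by
  ext m
  rw [Phi_apply, psiF_vert0, psiF_vert1]
  have : (N⁻¹ • y) m = N⁻¹ * y m := rfl
  rw [this, div_sub_div_same, max_zero_sub_max_neg_zero_eq_self, div_eq_inv_mul]

lemma phi_psi (y : ↥(sphere' n)) : phiMap n (psiMap n y) = y := by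
  apply Subtype.ext
  have hN := Ny_pos n y.2
  have hnormy : ‖(y : EuclideanSpace ℝ (Fin n))‖ = 1 := by
    have h2 : (y : EuclideanSpace ℝ (Fin n)) ∈ Metric.sphere (0 : EuclideanSpace ℝ (Fin n)) 1 :=
      y.2
    rwa [Metric.mem_sphere, dist_zero_right] at h2
  show ‖Phi n (psiF n _ _)‖⁻¹ • Phi n (psiF n _ _) = _
  rw [Phi_psiF]
  rw [norm_smul, hnormy, mul_one, norm_inv, Real.norm_eq_abs, abs_of_pos hN, inv_inv,
    smul_smul, mul_inv_cancel₀ (ne_of_gt hN), one_smul]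

lemma psi_phi (f : ↥(indRealizationIn (hexRow n) (SK n n))) : psiMap n (phiMap n f) = f := by
  apply Subtype.ext
  set F := (f : (Fin 2 × Fin (2 * n + 1)) → ℝ) with hF
  have hr : 0 < ‖Phi n F‖ := Phi_norm_pos n f.2
  have hNy : NyFun n ((phiMap n f : ↥(sphere' n)) : EuclideanSpace ℝ (Fin n)) = ‖Phi n F‖⁻¹ := by
    show ∑ m : Fin n, |(‖Phi n F‖⁻¹ • Phi n F) m| = ‖Phi n F‖⁻¹
    have habs : ∀ m : Fin n, |(‖Phi n F‖⁻¹ • Phi n F) m| = ‖Phi n F‖⁻¹ * |Phi n F m| := by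
      intro m
      have h1 : (‖Phi n F‖⁻¹ • Phi n F) m = ‖Phi n F‖⁻¹ * Phi n F m := rfl
      rw [h1, abs_mul, abs_of_pos (inv_pos.2 hr)]
    rw [Finset.sum_congr rfl fun m _ => habs m, ← Finset.mul_sum, Phi_sum_abs n f.2, mul_one]
  show psiF n _ _ = F
  rw [hNy]
  funext p
  by_cases hp : p ∈ SK n n
  · rw [SK_n_eq_range] at hp
    obtain ⟨⟨m, d⟩, rfl⟩ := hp
    have hcoord : ∀ m' : Fin n,
        ((phiMap n f : ↥(sphere' n)) : EuclideanSpace ℝ (Fin n)) m' = ‖Phi n F‖⁻¹ * Phi n F m' :=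
      fun m' => rfl
    have hmax0 : max (Phi n F m) 0 = F (vert n m 0) := by
      rcases edge_zero n f.2 m with h | h <;> rw [← hF] at h
      · rw [Phi_apply, h, zero_sub, max_eq_right (neg_nonpos.mpr (f.2.1 _))]
      · rw [Phi_apply, h, sub_zero, max_eq_left (f.2.1 _)]
    have hmax1 : max (-(Phi n F m)) 0 = F (vert n m 1) := by
      rcases edge_zero n f.2 m with h | h <;> rw [← hF] at h
      · rw [Phi_apply, h, zero_sub, neg_neg, max_eq_left (f.2.1 _)]
      · rw [Phi_apply, h, sub_zero, max_eq_right (neg_nonpos.mpr (f.2.1 _))]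
    have hdiv : ∀ a : ℝ, max (‖Phi n F‖⁻¹ * a) 0 / ‖Phi n F‖⁻¹ = max a 0 := by
      intro a
      rcases le_or_gt a 0 with ha | ha
      · have h2 : ‖Phi n F‖⁻¹ * a ≤ 0 := mul_nonpos_iff.2 (Or.inl ⟨(inv_pos.2 hr).le, ha⟩)
        rw [max_eq_right h2, max_eq_right ha, zero_div]
      · rw [max_eq_left (le_of_lt (mul_pos (inv_pos.2 hr) ha)), max_eq_left ha.le, mul_comm,
          mul_div_assoc, div_self (ne_of_gt (inv_pos.2 hr)), mul_one]
    fin_cases d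
    · show psiF n ((phiMap n f : ↥(sphere' n)) : EuclideanSpace ℝ (Fin n)) ‖Phi n F‖⁻¹
        (vert n m 0) = F (vert n m 0)
      rw [psiF_vert0, hcoord, hdiv, hmax0]
    · show psiF n ((phiMap n f : ↥(sphere' n)) : EuclideanSpace ℝ (Fin n)) ‖Phi n F‖⁻¹
        (vert n m 1) = F (vert n m 1)
      rw [psiF_vert1, hcoord,
        show -(‖Phi n F‖⁻¹ * Phi n F m) = ‖Phi n F‖⁻¹ * -(Phi n F m) by ring, hdiv, hmax1]
  · have h1 : psiF n ((phiMap n f : ↥(sphere' n)) : EuclideanSpace ℝ (Fin n)) ‖Phi n F‖⁻¹ p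
        = 0 := by
      by_contra h
      exact hp (psiF_support n h)
    rw [h1]
    by_contra h
    exact hp (f.2.2.2.1 (fun hc => h hc.symm))

lemma phi_cont : Continuous (phiMap n) := by
  have hPhi : Continuous fun f : ↥(indRealizationIn (hexRow n) (SK n n)) =>
      Phi n (f : _ → ℝ) := by
    apply (EuclideanSpace.equiv (Fin n) ℝ).symm.continuous.comp
    apply continuous_pi
    intro m
    exact ((continuous_apply (vert n m 0)).comp continuous_subtype_val).sub
      ((continuous_apply (vert n m 1)).comp continuous_subtype_val)
  have hinv : Continuous fun f : ↥(indRealizationIn (hexRow n) (SK n n)) =>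
      ‖Phi n (f : _ → ℝ)‖⁻¹ :=
    (hPhi.norm).inv₀ (fun f => ne_of_gt (Phi_norm_pos n f.2))
  exact Continuous.subtype_mk (hinv.smul hPhi) _

lemma psi_cont : Continuous (psiMap n) := by
  have hcoord : ∀ m : Fin n, Continuous fun y : ↥(sphere' n) =>
      ((y : EuclideanSpace ℝ (Fin n)) m) := by
    intro m
    exact (EuclideanSpace.proj (𝕜 := ℝ) m).continuous.comp continuous_subtype_val
  have hN : Continuous fun y : ↥(sphere' n) => NyFun n (y : EuclideanSpace ℝ (Fin n)) := by
    apply continuous_finset_sum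
    intro m _
    exact (hcoord m).abs
  have hNne : ∀ y : ↥(sphere' n), NyFun n (y : EuclideanSpace ℝ (Fin n)) ≠ 0 :=
    fun y => ne_of_gt (Ny_pos n y.2)
  apply Continuous.subtype_mk
  apply continuous_pi
  intro p
  show Continuous fun y : ↥(sphere' n) =>
    psiF n (y : EuclideanSpace ℝ (Fin n)) (NyFun n (y : EuclideanSpace ℝ (Fin n))) p
  unfold psiF
  by_cases h1 : (p.2 : ℕ) < 2 * n
  · simp only [dif_pos h1]
    by_cases h2 : (p.1 : ℕ) = (n - (p.2 : ℕ) / 2) % 2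
    · simp only [if_pos h2]
      by_cases h3 : (p.2 : ℕ) % 2 = 0
      · simp only [if_pos h3]
        exact ((hcoord _).max continuous_const).div hN hNne
      · simp only [if_neg h3]
        exact (((hcoord _).neg).max continuous_const).div hN hNne
    · simp only [if_neg h2]
      exact continuous_const
  · simp only [dif_neg h1]
    exact continuous_const

noncomputable def matchSphereHomeo :
    ↥(indRealizationIn (hexRow n) (SK n n)) ≃ₜ ↥(sphere' n) where
  toEquiv := ⟨phiMap n, psiMap n, psi_phi n, phi_psi n⟩
  continuous_toFun := phi_cont n
  continuous_invFun := psi_cont n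

end Sphere


lemma chain_equiv (n : ℕ) (d : ℕ) : ∀ k, k + d = n →
    Nonempty (ContinuousMap.HomotopyEquiv ↥(indRealizationIn (hexRow n) (SK n k))
      ↥(indRealizationIn (hexRow n) (SK n n))) := by
  induction d with
  | zero =>
    intro k hk
    have hkn : k = n := by omega
    subst hkn
    exact ⟨ContinuousMap.HomotopyEquiv.refl _⟩
  | succ d ih =>
    intro k hk
    have hkn : k < n := by omega
    obtain ⟨hu, hw1, huw1, hdom1⟩ := fold1_hyps n k hkn
    have e1 := foldEquiv (hexRow n) (SK n k) (uK n k) (w1K n k) hu hw1 huw1 hdom1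
    by_cases hlast : k + 1 = n
    · have hk1 : k = n - 1 := by omega
      rw [hk1] at e1 ⊢
      rw [SK_last n (by omega)] at e1
      exact ⟨e1⟩
    · obtain ⟨hu2, hw2, huw2, hdom2⟩ := fold2_hyps n k (by omega)
      have e2 := foldEquiv (hexRow n) (SK n k \ {w1K n k}) (uK n k) (w2K n k) hu2 hw2 huw2 hdom2
      rw [SK_step n k (by omega)] at e2
      obtain ⟨e3⟩ := ih (k + 1) (by omega)
      exact ⟨(e1.trans e2).trans e3⟩

/-- for `n ≥ 1`, `Ind (X_n^{(2)}) ≃ S^{n-1}`, where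
`X_n^{(2)} = H_{1×1×n} \ N[v^1_{2n+1}]`. -/
theorem ind_Xn2 (n : ℕ) (hn : 1 ≤ n) :
    Nonempty (ContinuousMap.HomotopyEquiv (↥(Xn2 n)) (↥(sphere' n))) := by
  have h0 : Xn2 n = indRealizationIn (hexRow n) (SK n 0) := by
    show indRealizationIn (hexRow n) ((insert (hexTop n) ((hexRow n).neighborSet (hexTop n)))ᶜ)
      = _
    rw [SK_zero]
  obtain ⟨e⟩ := chain_equiv n n 0 (by omega)
  rw [← h0] at e
  exact ⟨e.trans (matchSphereHomeo n).toHomotopyEquiv⟩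
end
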